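/- Let X, P ∈ ℂ^{n×n} be Hermitian matrices satisfying XPX = X and PXP = P. Then X and P have the same number of negative eigenvalues (counted with multiplicity) and the same rank. -/

import Mathlib

open Matrix

/-- The number of negative eigenvalues (counted with multiplicity) of a Hermitian matrix. -/
noncomputable def negEigCount {n : ℕ} {M : Matrix (Fin n) (Fin n) ℂ}
    (hM : M.IsHermitian) : ℕ :=
  Nat.card {i : Fin n // hM.eigenvalues i < 0}

namespace NegEigAux

variable {n : ℕ}

lemma sum_dp {ι : Type*} (s : Finset ι) (f : ι → (Fin n → ℂ)) (w : Fin n → ℂ) :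
    (∑ i ∈ s, f i) ⬝ᵥ w = ∑ i ∈ s, f i ⬝ᵥ w := by
  simp only [dotProduct, Finset.sum_apply, Finset.sum_mul]
  exact Finset.sum_comm

lemma dp_sum {ι : Type*} (s : Finset ι) (w : Fin n → ℂ) (f : ι → (Fin n → ℂ)) :
    w ⬝ᵥ (∑ i ∈ s, f i) = ∑ i ∈ s, w ⬝ᵥ f i := by
  simp only [dotProduct, Finset.sum_apply, Finset.mul_sum]
  exact Finset.sum_comm

lemma coe_sum_smul (c : Fin n → ℂ) (v : Fin n → EuclideanSpace ℂ (Fin n)) :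
    (WithLp.equiv 2 _) (∑ i, c i • v i) = ∑ i, c i • (WithLp.equiv 2 (Fin n → ℂ)) (v i) := by
  induction (Finset.univ : Finset (Fin n)) using Finset.induction with
  | empty => simp [WithLp.ofLp_zero]
  | insert _ _ h ih =>
      simp only [Finset.sum_insert h, WithLp.equiv_apply, WithLp.ofLp_add, WithLp.ofLp_smul] at ih ⊢
      rw [ih]

variable {M : Matrix (Fin n) (Fin n) ℂ} (hM : M.IsHermitian)

lemma sdp (i j : Fin n) :
    star ⇑(hM.eigenvectorBasis i) ⬝ᵥ ⇑(hM.eigenvectorBasis j) = if i = j then 1 else 0 := by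
  have h := orthonormal_iff_ite.mp hM.eigenvectorBasis.orthonormal i j
  rwa [EuclideanSpace.inner_eq_star_dotProduct, dotProduct_comm] at h

lemma repr_sum (x : EuclideanSpace ℂ (Fin n)) :
    (WithLp.equiv 2 (Fin n → ℂ)) x
      = ∑ i, (star ⇑(hM.eigenvectorBasis i) ⬝ᵥ ⇑x) • ⇑(hM.eigenvectorBasis i) := by
  have h := hM.eigenvectorBasis.sum_repr x
  simp_rw [hM.eigenvectorBasis.repr_apply_apply, EuclideanSpace.inner_eq_star_dotProduct,
    dotProduct_comm x.ofLp] at h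
  conv_lhs => rw [← h]
  simp only [WithLp.equiv_apply, WithLp.ofLp_sum, WithLp.ofLp_smul]

lemma mulVec_sum_smul (d : Fin n → ℂ) :
    M *ᵥ (∑ i, d i • ⇑(hM.eigenvectorBasis i)) =
      ∑ j, (d j * (hM.eigenvalues j : ℂ)) • ⇑(hM.eigenvectorBasis j) := by
  rw [← M.mulVecLin_apply, map_sum]
  refine Finset.sum_congr rfl fun j _ => ?_
  rw [LinearMap.map_smul, M.mulVecLin_apply, hM.mulVec_eigenvectorBasis,
    RCLike.real_smul_eq_coe_smul (K := ℂ), smul_smul]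
  rfl

lemma quad_sum (d : Fin n → ℂ) :
    star (∑ i, d i • ⇑(hM.eigenvectorBasis i)) ⬝ᵥ (M *ᵥ (∑ i, d i • ⇑(hM.eigenvectorBasis i))) =
    ((∑ i, hM.eigenvalues i * Complex.normSq (d i) : ℝ) : ℂ) := by
  rw [mulVec_sum_smul hM, star_sum]
  simp_rw [star_smul]
  rw [sum_dp]
  simp_rw [dp_sum]
  simp only [smul_dotProduct, dotProduct_smul, sdp hM, smul_eq_mul,
    mul_ite, mul_one, mul_zero, Finset.sum_ite_eq', Finset.mem_univ, if_true]
  push_cast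
  refine Finset.sum_congr rfl fun i _ => ?_
  rw [Finset.sum_ite_eq, if_pos (Finset.mem_univ i), Complex.normSq_eq_conj_mul_self,
    ← Complex.star_def]
  ring

lemma finrank_le_neg (W : Submodule ℂ (EuclideanSpace ℂ (Fin n)))
    (hW : ∀ x : EuclideanSpace ℂ (Fin n), x ∈ W → x ≠ 0 →
      ∀ r : ℝ, star ⇑x ⬝ᵥ (M *ᵥ ⇑x) = (r : ℂ) → r < 0) :
    Module.finrank ℂ W ≤ negEigCount hM := by
  classical
  let φ : W →ₗ[ℂ] ({i : Fin n // hM.eigenvalues i < 0} → ℂ) :=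
    { toFun := fun x i => star ⇑(hM.eigenvectorBasis i.1) ⬝ᵥ ⇑(x : EuclideanSpace ℂ (Fin n))
      map_add' := fun x y => by
        funext i
        simp [Submodule.coe_add, WithLp.ofLp_add, dotProduct_add]
      map_smul' := fun c x => by
        funext i
        simp [Submodule.coe_smul, WithLp.ofLp_smul, dotProduct_smul] }
  have hinj : Function.Injective φ := by
    rw [injective_iff_map_eq_zero]
    intro x hx0
    by_contra hne
    have hxE : (x : EuclideanSpace ℂ (Fin n)) ≠ 0 := by
      simpa [Submodule.coe_eq_zero] using hne
    set c : Fin n → ℂ := fun i => star ⇑(hM.eigenvectorBasis i) ⬝ᵥ ⇑(x : EuclideanSpace ℂ (Fin n)) with hc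
    have hc0 : ∀ i, hM.eigenvalues i < 0 → c i = 0 := fun i hi => congrFun hx0 ⟨i, hi⟩
    have hq : star ⇑(x : EuclideanSpace ℂ (Fin n)) ⬝ᵥ (M *ᵥ ⇑(x : EuclideanSpace ℂ (Fin n))) =
        ((∑ i, hM.eigenvalues i * Complex.normSq (c i) : ℝ) : ℂ) := by
      rw [show (x : EuclideanSpace ℂ (Fin n)).ofLp = _ from repr_sum hM (x : EuclideanSpace ℂ (Fin n)), quad_sum hM]
    have hr := hW _ x.2 hxE _ hq
    have : (0 : ℝ) ≤ ∑ i, hM.eigenvalues i * Complex.normSq (c i) := by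
      refine Finset.sum_nonneg fun i _ => ?_
      by_cases hi : hM.eigenvalues i < 0
      · simp [hc0 i hi]
      · exact mul_nonneg (le_of_not_gt hi) (Complex.normSq_nonneg _)
    linarith
  have h1 : Module.finrank ℂ W ≤ Module.finrank ℂ ({i : Fin n // hM.eigenvalues i < 0} → ℂ) :=
    LinearMap.finrank_le_finrank_of_injective hinj
  have he : negEigCount hM = Fintype.card {i : Fin n // hM.eigenvalues i < 0} :=
    Nat.card_eq_fintype_card
  rwa [Module.finrank_fintype_fun_eq_card, ← he] at h1

end NegEigAux

namespace NegEigAux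

variable {n : ℕ}

lemma neg_le {X P : Matrix (Fin n) (Fin n) ℂ} (hX : X.IsHermitian) (hP : P.IsHermitian)
    (h1 : X * P * X = X) : negEigCount hX ≤ negEigCount hP := by
  classical
  set W : Submodule ℂ (EuclideanSpace ℂ (Fin n)) :=
    Submodule.span ℂ (Set.range fun i : {i : Fin n // hX.eigenvalues i < 0} =>
      hX.eigenvectorBasis i.1) with hWdef
  have hcard : Module.finrank ℂ W = negEigCount hX := by
    have hli : LinearIndependent ℂ
        (fun i : {i : Fin n // hX.eigenvalues i < 0} => hX.eigenvectorBasis i.1) :=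
      (hX.eigenvectorBasis.orthonormal.comp _ Subtype.val_injective).linearIndependent
    rw [hWdef, finrank_span_eq_card hli]
    exact Nat.card_eq_fintype_card.symm
  rw [← hcard]
  refine finrank_le_neg hP W ?_
  intro x hxW hx r hr
  have hc0 : ∀ i, ¬ hX.eigenvalues i < 0 →
      star ⇑(hX.eigenvectorBasis i) ⬝ᵥ ⇑x = 0 := by
    intro i hi
    refine Submodule.span_induction (p := fun y _ => star ⇑(hX.eigenvectorBasis i) ⬝ᵥ (WithLp.equiv 2 (Fin n → ℂ)) y = 0)
      ?_ ?_ ?_ ?_ hxW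
    · rintro y ⟨j, rfl⟩
      show star ⇑(hX.eigenvectorBasis i) ⬝ᵥ ⇑(hX.eigenvectorBasis j.1) = 0
      rw [sdp hX, if_neg]
      rintro rfl
      exact hi j.2
    · simp only [WithLp.equiv_apply, WithLp.ofLp_zero, dotProduct_zero]
    · intro y z _ _ hy hz
      simp only [WithLp.equiv_apply, WithLp.ofLp_add, dotProduct_add] at *
      rw [hy, hz, add_zero]
    · intro a y _ hy
      simp only [WithLp.equiv_apply, WithLp.ofLp_smul, dotProduct_smul] at *
      rw [hy, smul_zero]
  set c : Fin n → ℂ := fun i => star ⇑(hX.eigenvectorBasis i) ⬝ᵥ ⇑x with hc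
  set d : Fin n → ℂ := fun i =>
    if hX.eigenvalues i < 0 then c i / (hX.eigenvalues i : ℂ) else 0 with hd
  have hdl : ∀ i, d i * (hX.eigenvalues i : ℂ) = c i := by
    intro i
    by_cases hi : hX.eigenvalues i < 0
    · have hne : (hX.eigenvalues i : ℂ) ≠ 0 := Complex.ofReal_ne_zero.mpr (ne_of_lt hi)
      rw [hd]
      simp only [if_pos hi]
      field_simp
    · rw [hd]
      simp only [if_neg hi, zero_mul]
      exact (hc0 i hi).symm
  have hXy : X *ᵥ (∑ i, d i • ⇑(hX.eigenvectorBasis i)) = ⇑x := by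
    rw [mulVec_sum_smul hX]
    simp_rw [hdl]
    exact (repr_sum hX x).symm
  have hq : star ⇑x ⬝ᵥ (P *ᵥ ⇑x) =
      star (∑ i, d i • ⇑(hX.eigenvectorBasis i)) ⬝ᵥ
        (X *ᵥ (∑ i, d i • ⇑(hX.eigenvectorBasis i))) := by
    conv_lhs => rw [← hXy]
    rw [star_mulVec, ← Matrix.dotProduct_mulVec, Matrix.mulVec_mulVec, Matrix.mulVec_mulVec,
      hX.eq, h1]
  rw [hq, quad_sum hX] at hr
  have hreq : r = ∑ i, hX.eigenvalues i * Complex.normSq (d i) := by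
    exact_mod_cast hr.symm
  have hex : ∃ i, c i ≠ 0 := by
    by_contra hall
    push_neg at hall
    apply hx
    have h0 : (WithLp.equiv 2 (Fin n → ℂ)) x = 0 := by
      rw [repr_sum hX x]
      refine Finset.sum_eq_zero fun i _ => ?_
      rw [show star ⇑(hX.eigenvectorBasis i) ⬝ᵥ ⇑x = c i from rfl, hall i, zero_smul]
    exact (WithLp.equiv 2 (Fin n → ℂ)).injective (h0.trans (WithLp.ofLp_zero (V := Fin n → ℂ) 2).symm)
  obtain ⟨i0, hi0⟩ := hex
  have hneg : hX.eigenvalues i0 < 0 := by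
    by_contra h
    exact hi0 (hc0 i0 h)
  have hd0 : d i0 ≠ 0 := by
    rw [hd]
    simp only [if_pos hneg]
    exact div_ne_zero hi0 (Complex.ofReal_ne_zero.mpr (ne_of_lt hneg))
  have hlt : ∑ i, hX.eigenvalues i * Complex.normSq (d i) < ∑ _i : Fin n, (0 : ℝ) := by
    refine Finset.sum_lt_sum (fun i _ => ?_) ⟨i0, Finset.mem_univ i0, ?_⟩
    · by_cases hi : hX.eigenvalues i < 0
      · exact mul_nonpos_of_nonpos_of_nonneg (le_of_lt hi) (Complex.normSq_nonneg _)
      · rw [hd]; simp [if_neg hi]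
    · exact mul_neg_of_neg_of_pos hneg (Complex.normSq_pos.mpr hd0)
  rw [hreq]
  simpa using hlt

end NegEigAux

/-- If `X`, `P` are Hermitian with `XPX = X` and `PXP = P`, then they have the same number of
negative eigenvalues and the same rank. -/
theorem stmt1 {n : ℕ} (X P : Matrix (Fin n) (Fin n) ℂ)
    (hX : X.IsHermitian) (hP : P.IsHermitian)
    (h1 : X * P * X = X) (h2 : P * X * P = P) :
    negEigCount hX = negEigCount hP ∧ X.rank = P.rank := by
  refine ⟨le_antisymm (NegEigAux.neg_le hX hP h1) (NegEigAux.neg_le hP hX h2), le_antisymm ?_ ?_⟩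
  · calc X.rank = (X * P * X).rank := by rw [h1]
      _ ≤ (X * P).rank := rank_mul_le_left _ _
      _ ≤ P.rank := rank_mul_le_right _ _
  · calc P.rank = (P * X * P).rank := by rw [h2]
      _ ≤ (P * X).rank := rank_mul_le_left _ _
      _ ≤ X.rank := rank_mul_le_right _ _
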